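/- (Marginal of the first component of the $q$-multinomial) Let $0<q<1$, $\theta_1,\ldots,\theta_k>0$, $n\in\mathbb{N}$, and let $f^B_{\mathcal X}$ be the $q$-multinomial probability function of the first kind. Then for every $x_1\in\{0,1,\ldots,n\}$, $\sum f^B_{\mathcal X}(x_1,x_2,\ldots,x_k) = \binom{n}{x_1}_q \frac{\theta_1^{x_1} q^{\binom{x_1}{2}}}{\prod_{i=1}^{n}(1+\theta_1 q^{i-1})}$, where the sum is over all $(x_2,\ldots,x_k)\in\mathbb{N}^{k-1}$ with $x_1+x_2+\cdots+x_k\le n$; i.e. $X_1$ is distributed according to the $q$-binomial distribution of the first kind with parameters $n,\theta_1$. -/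

import Mathlib

open scoped BigOperators
open Finset

/-- The `q`-factorial `[n]_q! = ∏_{k=1}^n (1-q^k)/(1-q)`. -/
noncomputable def qFact (q : ℝ) (n : ℕ) : ℝ :=
  ∏ k ∈ Finset.range n, (1 - q ^ (k + 1)) / (1 - q)

/-- The `q`-binomial coefficient. -/
noncomputable def qBinom (q : ℝ) (n x : ℕ) : ℝ :=
  qFact q n / (qFact q x * qFact q (n - x))

lemma qnum_pos {q : ℝ} (hq0 : 0 < q) (hq1 : q < 1) (n : ℕ) :
    0 < (1 - q ^ (n + 1)) / (1 - q) := by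
  apply div_pos <;> simp only [sub_pos]
  · exact pow_lt_one₀ hq0.le hq1 (Nat.succ_ne_zero n)
  · exact hq1

lemma qFact_pos {q : ℝ} (hq0 : 0 < q) (hq1 : q < 1) (n : ℕ) : 0 < qFact q n :=
  Finset.prod_pos fun k _ => qnum_pos hq0 hq1 k

lemma qFact_ne {q : ℝ} (hq0 : 0 < q) (hq1 : q < 1) (n : ℕ) : qFact q n ≠ 0 :=
  (qFact_pos hq0 hq1 n).ne'

lemma qFact_zero (q : ℝ) : qFact q 0 = 1 := by simp [qFact]

lemma qFact_succ (q : ℝ) (n : ℕ) :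
    qFact q (n + 1) = qFact q n * ((1 - q ^ (n + 1)) / (1 - q)) := by
  rw [qFact, Finset.prod_range_succ]; rfl

lemma qBinom_zero {q : ℝ} (hq0 : 0 < q) (hq1 : q < 1) (n : ℕ) : qBinom q n 0 = 1 := by
  rw [qBinom, qFact_zero, Nat.sub_zero, one_mul, div_self (qFact_ne hq0 hq1 n)]

lemma qBinom_self {q : ℝ} (hq0 : 0 < q) (hq1 : q < 1) (n : ℕ) : qBinom q n n = 1 := by
  rw [qBinom, Nat.sub_self, qFact_zero, mul_one, div_self (qFact_ne hq0 hq1 n)]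

lemma qPascal {q : ℝ} (hq0 : 0 < q) (hq1 : q < 1) {k n : ℕ} (hk : k < n) :
    qBinom q (n + 1) (k + 1) = q ^ (k + 1) * qBinom q n (k + 1) + qBinom q n k := by
  have h1 : n + 1 - (k + 1) = (n - k - 1) + 1 := by omega
  have h2 : n - (k + 1) = n - k - 1 := by omega
  have h3 : n - k - 1 + 1 = n - k := by omega
  have h4 : n - k = (n - k - 1) + 1 := by omega
  have hpow : q ^ (k + 1) * q ^ (n - k) = q ^ (n + 1) := by
    rw [← pow_add]; congr 1; omega
  have key : (1 - q ^ (n + 1)) / (1 - q)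
      = q ^ (k + 1) * ((1 - q ^ (n - k)) / (1 - q)) + (1 - q ^ (k + 1)) / (1 - q) := by
    have hne : (1 : ℝ) - q ≠ 0 := by linarith
    rw [mul_div_assoc', ← add_div]
    congr 1
    linear_combination hpow
  rw [qBinom, qBinom, qBinom, h1, h2, qFact_succ q n, qFact_succ q (k),
    qFact_succ q (n - k - 1), h3, key, h4, qFact_succ q (n - k - 1), h3]
  have b1 := qFact_ne hq0 hq1 k
  have b2 := qFact_ne hq0 hq1 (n - k - 1)
  have b4 := (qnum_pos hq0 hq1 k).ne'
  have b5 := (qnum_pos hq0 hq1 (n - k - 1)).ne'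
  rw [h3] at b5
  set a := qFact q k with ha
  set b := qFact q (n - k - 1) with hb
  set B := (1 - q ^ (k + 1)) / (1 - q) with hB
  set C := (1 - q ^ (n - k)) / (1 - q) with hC
  set N := qFact q n with hN
  field_simp

lemma qCauchy {q : ℝ} (hq0 : 0 < q) (hq1 : q < 1) (n : ℕ) (θ : ℝ) :
    ∑ x ∈ Finset.range (n + 1), qBinom q n x * θ ^ x * q ^ (x * (x - 1) / 2)
      = ∏ i ∈ Finset.range n, (1 + θ * q ^ i) := by
  induction n generalizing θ with
  | zero => simp [qBinom_zero hq0 hq1]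
  | succ n ih =>
    have tri : ∀ k : ℕ, (k + 1) * (k + 1 - 1) / 2 = k * (k - 1) / 2 + k :=
      fun k => Nat.triangle_succ k
    have key : ∀ k ∈ Finset.range n,
        qBinom q (n + 1) (k + 1) * θ ^ (k + 1) * q ^ ((k + 1) * (k + 1 - 1) / 2)
          = qBinom q n (k + 1) * (θ * q) ^ (k + 1) * q ^ ((k + 1) * (k + 1 - 1) / 2)
            + θ * (qBinom q n k * (θ * q) ^ k * q ^ (k * (k - 1) / 2)) := by
      intro k hk
      rw [qPascal hq0 hq1 (Finset.mem_range.mp hk), tri k, pow_add, mul_pow, mul_pow]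
      ring
    calc ∑ x ∈ Finset.range (n + 1 + 1),
          qBinom q (n + 1) x * θ ^ x * q ^ (x * (x - 1) / 2)
        = (∑ k ∈ Finset.range (n + 1),
            qBinom q (n + 1) (k + 1) * θ ^ (k + 1) * q ^ ((k + 1) * (k + 1 - 1) / 2))
            + qBinom q (n + 1) 0 * θ ^ 0 * q ^ (0 * (0 - 1) / 2) := by
          rw [Finset.sum_range_succ']
      _ = ((∑ k ∈ Finset.range n,
            (qBinom q n (k + 1) * (θ * q) ^ (k + 1) * q ^ ((k + 1) * (k + 1 - 1) / 2)
              + θ * (qBinom q n k * (θ * q) ^ k * q ^ (k * (k - 1) / 2))))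
            + qBinom q (n + 1) (n + 1) * θ ^ (n + 1) * q ^ ((n + 1) * (n + 1 - 1) / 2)) + 1 := by
          rw [Finset.sum_range_succ, Finset.sum_congr rfl key,
            qBinom_zero hq0 hq1]
          norm_num
      _ = (∑ x ∈ Finset.range (n + 1),
            qBinom q n x * (θ * q) ^ x * q ^ (x * (x - 1) / 2)) * (1 + θ) := by
          have h1 := Finset.sum_range_succ
            (fun x => qBinom q n x * (θ * q) ^ x * q ^ (x * (x - 1) / 2)) n
          have h2 := Finset.sum_range_succ'
            (fun x => qBinom q n x * (θ * q) ^ x * q ^ (x * (x - 1) / 2)) n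
          rw [Finset.sum_add_distrib, ← Finset.mul_sum]
          rw [qBinom_zero hq0 hq1, qBinom_self hq0 hq1, tri n, pow_add, mul_pow] at *
          linear_combination -h2 - θ * h1
      _ = (∏ i ∈ Finset.range n, (1 + θ * q * q ^ i)) * (1 + θ) := by rw [ih]
      _ = ∏ i ∈ Finset.range (n + 1), (1 + θ * q ^ i) := by
          rw [Finset.prod_range_succ']
          simp [pow_succ, mul_assoc, mul_comm, mul_left_comm]

/-- The `q`-multinomial coefficient. -/
noncomputable def qMultinomCoeff (q : ℝ) (n : ℕ) {k : ℕ} (x : Fin k → ℕ) : ℝ :=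
  qFact q n / ((∏ j, qFact q (x j)) * qFact q (n - ∑ j, x j))

/-- The `q`-multinomial probability function of the first kind. -/
noncomputable def qMultinomPF (q : ℝ) (n : ℕ) {k : ℕ} (θ : Fin k → ℝ) (x : Fin k → ℕ) : ℝ :=
  qMultinomCoeff q n x *
    ∏ j, (θ j ^ x j * q ^ (x j * (x j - 1) / 2) /
      ∏ i ∈ Finset.range (n - ∑ i ∈ Finset.univ.filter (· < j), x i), (1 + θ j * q ^ i))

lemma filter_lt_succ_sum {m : ℕ} (j : Fin m) (f : Fin (m + 1) → ℕ) :
    ∑ i ∈ Finset.univ.filter (· < Fin.succ j), f i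
      = f 0 + ∑ i ∈ Finset.univ.filter (· < j), f (Fin.succ i) := by
  rw [Finset.sum_filter, Finset.sum_filter, Fin.sum_univ_succ]
  congr 1
  · simp [Fin.succ_pos]

lemma coeff_cons {q : ℝ} (hq0 : 0 < q) (hq1 : q < 1) {m : ℕ} (n x₁ : ℕ) (y : Fin m → ℕ) :
    qMultinomCoeff q n (Fin.cons x₁ y) = qBinom q n x₁ * qMultinomCoeff q (n - x₁) y := by
  rw [qMultinomCoeff, qMultinomCoeff, qBinom, Fin.sum_cons]
  have hp : (∏ j : Fin (m + 1), qFact q ((Fin.cons x₁ y : Fin (m + 1) → ℕ) j))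
      = qFact q x₁ * ∏ j : Fin m, qFact q (y j) := by
    rw [Fin.prod_univ_succ]; simp
  rw [hp, ← Nat.sub_sub]
  have b1 := qFact_ne hq0 hq1 x₁
  have b2 := qFact_ne hq0 hq1 (n - x₁)
  have b3 := qFact_ne hq0 hq1 (n - x₁ - ∑ j, y j)
  have b4 : (∏ j : Fin m, qFact q (y j)) ≠ 0 :=
    Finset.prod_ne_zero_iff.mpr fun j _ => qFact_ne hq0 hq1 (y j)
  field_simp

lemma pf_cons {q : ℝ} (hq0 : 0 < q) (hq1 : q < 1) {m : ℕ} (θ : Fin (m + 1) → ℝ)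
    (n x₁ : ℕ) (y : Fin m → ℕ) :
    qMultinomPF q n θ (Fin.cons x₁ y)
      = (qBinom q n x₁ * (θ 0 ^ x₁ * q ^ (x₁ * (x₁ - 1) / 2)) /
            ∏ i ∈ Finset.range n, (1 + θ 0 * q ^ i))
          * qMultinomPF q (n - x₁) (fun j => θ j.succ) y := by
  rw [qMultinomPF, qMultinomPF, coeff_cons hq0 hq1]
  have hprod : (∏ j : Fin (m + 1), (θ j ^ (Fin.cons x₁ y j)
        * q ^ ((Fin.cons x₁ y j) * ((Fin.cons x₁ y j) - 1) / 2) /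
        ∏ i ∈ Finset.range (n - ∑ i ∈ Finset.univ.filter (· < j), Fin.cons x₁ y i),
          (1 + θ j * q ^ i)))
      = (θ 0 ^ x₁ * q ^ (x₁ * (x₁ - 1) / 2) / ∏ i ∈ Finset.range n, (1 + θ 0 * q ^ i))
        * ∏ j : Fin m, (θ j.succ ^ y j * q ^ (y j * (y j - 1) / 2) /
            ∏ i ∈ Finset.range ((n - x₁) - ∑ i ∈ Finset.univ.filter (· < j), y i),
              (1 + θ j.succ * q ^ i)) := by
    rw [Fin.prod_univ_succ]
    congr 1
    · have : (Finset.univ.filter (· < (0 : Fin (m + 1)))) = ∅ := by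
        ext i; simp
      simp [this]
    · refine Finset.prod_congr rfl fun j _ => ?_
      rw [filter_lt_succ_sum j (Fin.cons x₁ y)]
      simp only [Fin.cons_zero, Fin.cons_succ]
      rw [← Nat.sub_sub]
  rw [hprod]
  ring

lemma sum_piFinset_cons {k n : ℕ} (f : (Fin (k + 1) → ℕ) → ℝ) :
    ∑ y ∈ Fintype.piFinset (fun _ : Fin (k + 1) => Finset.range (n + 1)), f y
      = ∑ a ∈ Finset.range (n + 1),
          ∑ z ∈ Fintype.piFinset (fun _ : Fin k => Finset.range (n + 1)),
            f (Fin.cons a z) := by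
  classical
  have h := Finset.filter_piFinset_eq_map_consEquiv
    (fun _ : Fin (k + 1) => Finset.range (n + 1)) (fun _ => True)
  simp only [Finset.filter_true] at h
  rw [h, Finset.sum_map, Finset.sum_product]
  rfl

lemma filter_piFinset_eq {k n n' : ℕ} (h : n' ≤ n) :
    (Fintype.piFinset fun _ : Fin k => Finset.range (n + 1)).filter
        (fun y => ∑ j, y j ≤ n')
      = (Fintype.piFinset fun _ : Fin k => Finset.range (n' + 1)).filter
        (fun y => ∑ j, y j ≤ n') := by
  ext z
  simp only [Finset.mem_filter, Fintype.mem_piFinset, Finset.mem_range]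
  constructor
  · rintro ⟨h1, h2⟩
    refine ⟨fun j => Nat.lt_succ_of_le (le_trans ?_ h2), h2⟩
    exact Finset.single_le_sum (f := fun j => z j) (fun _ _ => Nat.zero_le _)
      (Finset.mem_univ j)
  · rintro ⟨h1, h2⟩
    exact ⟨fun j => lt_of_lt_of_le (h1 j) (by omega), h2⟩

lemma sum_P {q : ℝ} (hq0 : 0 < q) (hq1 : q < 1) (n : ℕ) {t : ℝ} (ht : 0 < t) :
    ∑ a ∈ Finset.range (n + 1),
        qBinom q n a * (t ^ a * q ^ (a * (a - 1) / 2)) / ∏ i ∈ Finset.range n, (1 + t * q ^ i)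
      = 1 := by
  have hD : 0 < ∏ i ∈ Finset.range n, (1 + t * q ^ i) :=
    Finset.prod_pos fun i _ => by positivity
  rw [← Finset.sum_div, div_eq_one_iff_eq hD.ne', ← qCauchy hq0 hq1 n t]
  exact Finset.sum_congr rfl fun a _ => by ring

lemma totalMass {q : ℝ} (hq0 : 0 < q) (hq1 : q < 1) :
    ∀ (k n : ℕ) (θ : Fin k → ℝ), (∀ j, 0 < θ j) →
      ∑ y ∈ (Fintype.piFinset fun _ : Fin k => Finset.range (n + 1)).filter
          (fun y => ∑ j, y j ≤ n),
        qMultinomPF q n θ y = 1 := by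
  intro k
  induction k with
  | zero =>
    intro n θ hθ
    simp [qMultinomPF, qMultinomCoeff, div_self (qFact_ne hq0 hq1 n)]
  | succ k ih =>
    intro n θ hθ
    rw [Finset.sum_filter, sum_piFinset_cons]
    have step : ∀ a ∈ Finset.range (n + 1),
        (∑ z ∈ Fintype.piFinset (fun _ : Fin k => Finset.range (n + 1)),
          if (∑ j, (Fin.cons a z : Fin (k + 1) → ℕ) j) ≤ n
            then qMultinomPF q n θ (Fin.cons a z) else 0)
        = qBinom q n a * (θ 0 ^ a * q ^ (a * (a - 1) / 2)) /
            ∏ i ∈ Finset.range n, (1 + θ 0 * q ^ i) := by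
      intro a ha
      have han : a ≤ n := Nat.lt_succ_iff.mp (Finset.mem_range.mp ha)
      have h1 : ∀ z : Fin k → ℕ,
          (if (∑ j, (Fin.cons a z : Fin (k + 1) → ℕ) j) ≤ n
            then qMultinomPF q n θ (Fin.cons a z) else 0)
          = (qBinom q n a * (θ 0 ^ a * q ^ (a * (a - 1) / 2)) /
              ∏ i ∈ Finset.range n, (1 + θ 0 * q ^ i)) *
            (if (∑ j, z j) ≤ n - a then qMultinomPF q (n - a) (fun j => θ j.succ) z
              else 0) := by
        intro z
        rw [Fin.sum_cons]
        by_cases hc : a + ∑ j, z j ≤ n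
        · rw [if_pos hc, if_pos (by omega), pf_cons hq0 hq1]
        · rw [if_neg hc, if_neg (by omega), mul_zero]
      rw [Finset.sum_congr rfl fun z _ => h1 z, ← Finset.mul_sum, ← Finset.sum_filter,
        filter_piFinset_eq (Nat.sub_le n a), ih (n - a) (fun j => θ j.succ)
          (fun j => hθ j.succ), mul_one]
    rw [Finset.sum_congr rfl step]
    exact sum_P hq0 hq1 n (hθ 0)

/-- **Marginal of the first component of the q-multinomial** (with `k = m+1 ≥ 1`
components): summing the joint p.f. over the last `m` coordinates gives the
`q`-binomial distribution of the first kind with parameters `n, θ₁`. -/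
theorem qMultinomial_first_marginal (q : ℝ) (hq0 : 0 < q) (hq1 : q < 1)
    (m : ℕ) (θ : Fin (m + 1) → ℝ) (hθ : ∀ j, 0 < θ j) (n : ℕ)
    (x₁ : ℕ) (hx₁ : x₁ ≤ n) :
    ∑ y ∈ (Fintype.piFinset fun _ : Fin m => Finset.range (n + 1)).filter
        (fun y => x₁ + ∑ j, y j ≤ n),
      qMultinomPF q n θ (Fin.cons x₁ y) =
      qBinom q n x₁ * (θ 0 ^ x₁ * q ^ (x₁ * (x₁ - 1) / 2)) /
        ∏ i ∈ Finset.range n, (1 + θ 0 * q ^ i) := by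
  rw [Finset.sum_congr rfl (fun y _ => pf_cons hq0 hq1 θ n x₁ y), ← Finset.mul_sum]
  have hfe : (Fintype.piFinset fun _ : Fin m => Finset.range (n + 1)).filter
        (fun y => x₁ + ∑ j, y j ≤ n)
      = (Fintype.piFinset fun _ : Fin m => Finset.range (n - x₁ + 1)).filter
        (fun y => ∑ j, y j ≤ n - x₁) := by
    ext z
    simp only [Finset.mem_filter, Fintype.mem_piFinset, Finset.mem_range]
    have hz : ∀ j, z j ≤ ∑ j, z j := fun j =>
      Finset.single_le_sum (f := fun j => z j) (fun _ _ => Nat.zero_le _)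
        (Finset.mem_univ j)
    constructor
    · rintro ⟨h1, h2⟩
      exact ⟨fun j => by have := hz j; omega, by omega⟩
    · rintro ⟨h1, h2⟩
      exact ⟨fun j => by have := h1 j; omega, by omega⟩
  rw [hfe, totalMass hq0 hq1 m (n - x₁) (fun j => θ j.succ) (fun j => hθ j.succ),
    mul_one]
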